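/- Let x_1, ..., x_k ∈ ℝ^n and α_1, ..., α_k ∈ ℝ with ∑_{i=1}^k α_i = 1. Then ∑_{i,j=1}^k α_i α_j ‖x_i - x_j‖₁ ≤ (n/2) · D, where D = max_{1 ≤ i,j ≤ k} ‖x_i - x_j‖₁. -/

import Mathlib

open MeasureTheory Set Finset

lemma indic_eq (a b : ℝ) :
    (fun t => |(if a ≤ t then (1:ℝ) else 0) - (if b ≤ t then 1 else 0)|) =
      (Ico (min a b) (max a b)).indicator 1 := by
  funext t
  rcases lt_or_ge t a with h1 | h1 <;> rcases lt_or_ge t b with h2 | h2 <;>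
    simp_all [indicator_apply, min_le_iff, lt_max_iff, not_le.2, abs_sub_comm]

lemma indic_int (a b : ℝ) :
    ∫ t, |(if a ≤ t then (1:ℝ) else 0) - (if b ≤ t then 1 else 0)| = |a - b| := by
  rw [indic_eq, integral_indicator_one measurableSet_Ico, measureReal_def, Real.volume_Ico]
  rcases le_total a b with h | h
  · rw [min_eq_left h, max_eq_right h, ENNReal.toReal_ofReal (by linarith), abs_of_nonpos (by linarith)]
    ring
  · rw [min_eq_right h, max_eq_left h, ENNReal.toReal_ofReal (by linarith), abs_of_nonneg (by linarith)]

lemma indic_integrable (a b : ℝ) :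
    Integrable (fun t => |(if a ≤ t then (1:ℝ) else 0) - (if b ≤ t then 1 else 0)|) := by
  rw [indic_eq, integrable_indicator_iff measurableSet_Ico]
  exact integrableOn_const measure_Ico_lt_top.ne

lemma oneD {k : ℕ} (hk : 0 < k) (y : Fin k → ℝ) (α : Fin k → ℝ) (hsum : ∑ i, α i = 1)
    (d : ℝ) (h : ∀ i j, |y i - y j| ≤ d) :
    ∑ i, ∑ j, α i * α j * |y i - y j| ≤ d / 2 := by
  have : Nonempty (Fin k) := Fin.pos_iff_nonempty.1 hk
  set f : Fin k → ℝ → ℝ := fun i t => if y i ≤ t then 1 else 0 with hf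
  -- min and max of y
  obtain ⟨i0, hi0⟩ := Finite.exists_min y
  obtain ⟨j0, hj0⟩ := Finite.exists_max y
  have hmm : y j0 - y i0 ≤ d := by
    have := h j0 i0
    rw [abs_of_nonneg (by linarith [hi0 j0])] at this
    linarith
  -- rewrite LHS as an integral
  have key : ∑ i, ∑ j, α i * α j * |y i - y j| =
      ∫ t, ∑ i, ∑ j, α i * α j * |f i t - f j t| := by
    rw [integral_finset_sum]
    · refine Finset.sum_congr rfl fun i _ => ?_
      rw [integral_finset_sum]
      · refine Finset.sum_congr rfl fun j _ => ?_
        rw [integral_const_mul, indic_int]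
      · exact fun j _ => ((indic_integrable (y i) (y j)).const_mul _)
    · exact fun i _ => integrable_finset_sum _
        fun j _ => ((indic_integrable (y i) (y j)).const_mul _)
  rw [key]
  -- bound integrand pointwise by (1/2) * indicator
  have hbound : ∀ t, ∑ i, ∑ j, α i * α j * |f i t - f j t| ≤
      (Ico (y i0) (y j0)).indicator (fun _ => (1:ℝ)/2) t := by
    intro t
    by_cases ht : t ∈ Ico (y i0) (y j0)
    · -- inside: use 2S(1-S) ≤ 1/2
      have hval : ∀ i j, |f i t - f j t| = f i t + f j t - 2 * (f i t * f j t) := by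
        intro i j
        simp only [hf]
        split_ifs <;> norm_num
      set S := ∑ i, α i * f i t with hS
      have inner : ∀ i : Fin k, ∑ j, α i * α j * (f i t + f j t - 2 * (f i t * f j t)) =
          α i * f i t + α i * S - 2 * (α i * f i t) * S := by
        intro i
        have : ∀ j : Fin k, α i * α j * (f i t + f j t - 2 * (f i t * f j t)) =
            α i * f i t * α j + α i * (α j * f j t) - 2 * (α i * f i t) * (α j * f j t) :=
          fun j => by ring
        simp only [this, Finset.sum_sub_distrib, Finset.sum_add_distrib, ← Finset.mul_sum,
          ← hS, hsum]
        ring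
      have : ∑ i, ∑ j, α i * α j * |f i t - f j t| = 2 * S - 2 * S ^ 2 := by
        simp only [fun i j => hval i j, inner, Finset.sum_sub_distrib, Finset.sum_add_distrib]
        simp only [show ∀ i : Fin k, α i * S = S * α i from fun i => mul_comm _ _,
          show ∀ i : Fin k, 2 * (α i * f i t) * S = 2 * S * (α i * f i t) from fun i => by ring,
          ← Finset.mul_sum, ← hS, hsum]
        ring
      rw [this]
      rw [indicator_of_mem ht]
      nlinarith [sq_nonneg ((∑ i, α i * f i t) - 1/2)]
    · -- outside: all f equal
      rw [indicator_of_notMem ht]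
      rw [Set.mem_Ico, not_and_or, not_le, not_lt] at ht
      have hall : ∀ i, f i t = f i0 t := by
        intro i
        rcases ht with ht | ht
        · simp only [hf, if_neg (not_le.2 (lt_of_lt_of_le ht (hi0 i))), if_neg (not_le.2 ht)]
        · simp only [hf, if_pos (le_trans (hj0 i) ht), if_pos (le_trans (hj0 i0) ht)]
      apply le_of_eq
      refine Finset.sum_eq_zero fun i _ => Finset.sum_eq_zero fun j _ => ?_
      rw [hall i, hall j, sub_self, abs_zero, mul_zero]
  calc ∫ t, ∑ i, ∑ j, α i * α j * |f i t - f j t|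
      ≤ ∫ t, (Ico (y i0) (y j0)).indicator (fun _ => (1:ℝ)/2) t := by
        apply integral_mono
        · exact integrable_finset_sum _ fun i _ => integrable_finset_sum _
            fun j _ => ((indic_integrable (y i) (y j)).const_mul _)
        · rw [integrable_indicator_iff measurableSet_Ico]
          exact integrableOn_const measure_Ico_lt_top.ne
        · exact hbound
    _ = (1/2) * (y j0 - y i0) := by
        rw [integral_indicator_const _ measurableSet_Ico]
        simp [Real.volume_Ico, ENNReal.toReal_ofReal (by linarith [hi0 j0] : (0:ℝ) ≤ y j0 - y i0),
          max_eq_left (by linarith [hi0 j0] : (0:ℝ) ≤ y j0 - y i0)]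
        ring
    _ ≤ d / 2 := by linarith

theorem stmt_6 (n k : ℕ) (x : Fin k → PiLp 1 fun _ : Fin n => ℝ) (α : Fin k → ℝ)
    (hsum : ∑ i, α i = 1) :
    ∑ i, ∑ j, α i * α j * ‖x i - x j‖ ≤
      ((n : ℝ) / 2) * Metric.diam (Set.range x) := by
  rcases Nat.eq_zero_or_pos k with rfl | hk
  · simp at hsum
  set D := Metric.diam (Set.range x) with hD
  have hDnn : 0 ≤ D := Metric.diam_nonneg
  have hnorm : ∀ v : PiLp 1 fun _ : Fin n => ℝ, ‖v‖ = ∑ c, |v c| := by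
    intro v
    simp [PiLp.norm_eq_sum (p := 1) (by norm_num), Real.rpow_one]
  have hcoord : ∀ (c : Fin n) (i j : Fin k), |x i c - x j c| ≤ D := by
    intro c i j
    have h1 : |x i c - x j c| ≤ ‖x i - x j‖ := by
      rw [hnorm]
      exact Finset.single_le_sum (f := fun c => |(x i - x j) c|)
        (fun c _ => abs_nonneg _) (Finset.mem_univ c)
    have h2 : ‖x i - x j‖ = dist (x i) (x j) := (dist_eq_norm _ _).symm
    have h3 : dist (x i) (x j) ≤ D :=
      Metric.dist_le_diam_of_mem ((Set.finite_range x).isBounded)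
        (Set.mem_range_self i) (Set.mem_range_self j)
    linarith
  calc ∑ i, ∑ j, α i * α j * ‖x i - x j‖
      = ∑ c, ∑ i, ∑ j, α i * α j * |x i c - x j c| := by
        have e : ∀ i j : Fin k, α i * α j * ‖x i - x j‖ =
            ∑ c, α i * α j * |x i c - x j c| := by
          intro i j
          rw [hnorm, Finset.mul_sum]
          rfl
        simp only [e]
        calc ∑ i, ∑ j, ∑ c, α i * α j * |x i c - x j c|
            = ∑ i, ∑ c, ∑ j, α i * α j * |x i c - x j c| :=
              Finset.sum_congr rfl fun i _ => Finset.sum_comm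
          _ = ∑ c, ∑ i, ∑ j, α i * α j * |x i c - x j c| := Finset.sum_comm
    _ ≤ ∑ _c : Fin n, D / 2 := by
        refine Finset.sum_le_sum fun c _ => ?_
        exact oneD hk (fun i => x i c) α hsum D (fun i j => hcoord c i j)
    _ = ((n : ℝ) / 2) * D := by
        rw [Finset.sum_const]
        simp
        ring
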